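/- Let (ε_k)_{k≥0} be i.i.d. symmetric Bernoulli random variables (P(ε_k = ±1) = 1/2) and define the skip free process M by M_0 = 0 and M_n = Σ_{j=1}^n ε_{⌊log₂ j⌋} for n ≥ 1 (so that for every k ≥ 0 all the increments M_n − M_{n−1} with n ∈ [2^k, 2^{k+1} − 1] equal ε_k). Then: (1) Θ^0(M) ≐ M; (2) T_1(M) < ∞ almost surely; (3) Θ^1(M) ≐ M; (4) M is not a discrete Ocone local martingale. -/

import Mathlib

open MeasureTheory ProbabilityTheory Filter Finset
open scoped ENNReal NNReal

noncomputable section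

/-- The quadratic variation `[s]_n` of a discrete path `s`. -/
def qv (s : ℕ → ℤ) (n : ℕ) : ℕ :=
  ∑ k ∈ Finset.range n, (s (k + 1) - s k).natAbs ^ 2

/-- Reflection of a discrete path at level `a`:
`Θ^a(s)_n = ∑_{k=1}^n (1_{k ≤ T_a(s)} - 1_{k > T_a(s)}) (s_k - s_{k-1})`,
where `k ≤ T_a(s)` iff `s_j ≠ a` for every `j < k`. -/
def reflect (a : ℤ) (s : ℕ → ℤ) : ℕ → ℤ := fun n =>
  ∑ k ∈ Finset.range n, if ∀ j ≤ k, s j ≠ a then s (k + 1) - s k else s k - s (k + 1)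

/-- A (deterministic) skip free path: starts at `0` and has increments in `{-1, 0, 1}`. -/
def SkipFreePath (s : ℕ → ℤ) : Prop :=
  s 0 = 0 ∧ ∀ n, s (n + 1) - s n = 1 ∨ s (n + 1) - s n = 0 ∨ s (n + 1) - s n = -1

/-- The uniform law on `{-1, +1} ⊆ ℤ`. -/
def bern : Measure ℤ :=
  (2 : ℝ≥0∞)⁻¹ • Measure.dirac (1 : ℤ) + (2 : ℝ≥0∞)⁻¹ • Measure.dirac (-1 : ℤ)

/-- `S` is a symmetric Bernoulli random walk: `S_0 = 0` a.s. and the increments are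
i.i.d. uniform on `{-1, +1}`. -/
def IsBernoulliRW {Ω : Type*} [MeasurableSpace Ω] (P : Measure Ω) (S : ℕ → Ω → ℤ) : Prop :=
  (∀ᵐ ω ∂P, S 0 ω = 0) ∧
    iIndepFun (fun n ω => S (n + 1) ω - S n ω) P ∧
    ∀ n, Measure.map (fun ω => S (n + 1) ω - S n ω) P = bern

/-- `M` is a discrete Ocone local martingale: it is equal in law to a symmetric Bernoulli
random walk time changed by an independent nondecreasing `ℕ`-valued process with
increments in `{0, 1}`. -/
def IsDiscreteOcone {Ω : Type*} [MeasurableSpace Ω] (P : Measure Ω) (M : ℕ → Ω → ℤ) : Prop :=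
  ∃ (Ω' : Type) (_ : MeasurableSpace Ω') (P' : Measure Ω') (S : ℕ → Ω' → ℤ) (A : ℕ → Ω' → ℕ),
    IsProbabilityMeasure P' ∧ IsBernoulliRW P' S ∧
    (∀ ω, A 0 ω = 0) ∧ (∀ ω n, A (n + 1) ω = A n ω ∨ A (n + 1) ω = A n ω + 1) ∧
    IndepFun (fun ω => (S · ω)) (fun ω => (A · ω)) P' ∧
    Measure.map (fun ω => (fun n => M n ω)) P
      = Measure.map (fun ω => (fun n => S (A n ω) ω)) P'

/-- The successive times at which the quadratic variation of `s` increases: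
`τ_0 = 0` and `τ_{n+1} = inf {k > τ_n : [s]_k = n + 1}`, with `inf ∅ = τ_n`. -/
def tauP (s : ℕ → ℤ) : ℕ → ℕ
  | 0 => 0
  | n + 1 => max (tauP s n) (sInf {k | tauP s n < k ∧ qv s k = n + 1})

/-- The time-changed path `S^s = (s_{τ_n})_n`. -/
def SM (s : ℕ → ℤ) : ℕ → ℤ := fun n => s (tauP s n)


/-! ### Auxiliary lemmas -/

lemma two_inv_add_two_inv : (2 : ℝ≥0∞)⁻¹ + 2⁻¹ = 1 := by
  rw [← two_mul, ENNReal.mul_inv_cancel] <;> norm_num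

instance bern_prob : IsProbabilityMeasure bern := by
  constructor
  simp only [bern, Measure.add_apply, Measure.smul_apply, Measure.dirac_apply, smul_eq_mul]
  simp [two_inv_add_two_inv]

lemma bern_apply_ms {s : Set ℤ} (hs : MeasurableSet s) :
    bern s = 2⁻¹ * s.indicator 1 1 + 2⁻¹ * s.indicator 1 (-1) := by
  simp [bern, Measure.dirac_apply' _ hs]

lemma bern_singleton (t : ℤ) : bern {t} = if t = 1 ∨ t = -1 then 2⁻¹ else 0 := by
  rw [bern_apply_ms (measurableSet_singleton t)]
  rcases eq_or_ne t 1 with h | h <;> rcases eq_or_ne t (-1) with h' | h' <;>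
    simp_all [Set.indicator, eq_comm]

lemma bern_neg_singleton (t : ℤ) : bern {-t} = bern {t} := by
  rw [bern_singleton, bern_singleton]
  have : (-t = 1 ∨ -t = -1) ↔ (t = 1 ∨ t = -1) := by omega
  rw [if_congr this rfl rfl]

/-! ### Prefix cylinder sets -/

def pre (n : ℕ) (c : ℕ → ℤ) : Set (ℕ → ℤ) := {x | ∀ i < n, x i = c i}

def preSets : Set (Set (ℕ → ℤ)) := {s | ∃ n c, s = pre n c}

lemma measurableSet_pre (n : ℕ) (c : ℕ → ℤ) : MeasurableSet (pre n c) := by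
  have : pre n c = ⋂ i ∈ Finset.range n, (fun x : ℕ → ℤ => x i) ⁻¹' {c i} := by
    ext x; simp [pre]
  rw [this]
  exact MeasurableSet.biInter (Set.to_countable _)
    (fun i _ => (measurable_pi_apply i) (measurableSet_singleton _))

lemma isPiSystem_preSets : IsPiSystem preSets := by
  rintro s ⟨n1, c1, rfl⟩ t ⟨n2, c2, rfl⟩ hne
  obtain ⟨y, hy1, hy2⟩ := hne
  rcases le_total n1 n2 with h | h
  · refine ⟨n2, c2, ?_⟩
    apply Set.inter_eq_right.2
    intro x hx i hi
    rw [hx i (lt_of_lt_of_le hi h), ← hy2 i (lt_of_lt_of_le hi h), hy1 i hi]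
  · refine ⟨n1, c1, ?_⟩
    apply Set.inter_eq_left.2
    intro x hx i hi
    rw [hx i (lt_of_lt_of_le hi h), ← hy1 i (lt_of_lt_of_le hi h), hy2 i hi]

lemma generateFrom_preSets :
    (inferInstance : MeasurableSpace (ℕ → ℤ)) = MeasurableSpace.generateFrom preSets := by
  apply le_antisymm
  · have heval : ∀ i : ℕ, @Measurable (ℕ → ℤ) ℤ (MeasurableSpace.generateFrom preSets) _
        (fun x => x i) := by
      intro i
      refine @measurable_to_countable' ℤ (ℕ → ℤ) _ _ (MeasurableSpace.generateFrom preSets) _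
        fun z => ?_
      have : (fun x : ℕ → ℤ => x i) ⁻¹' {z}
          = ⋃ v : {v : Fin (i + 1) → ℤ // v ⟨i, Nat.lt_succ_self i⟩ = z},
            pre (i + 1) (fun j => if h : j < i + 1 then (v : Fin (i+1) → ℤ) ⟨j, h⟩ else 0) := by
        ext x
        constructor
        · intro hx
          refine Set.mem_iUnion.2 ⟨⟨fun j => x j, hx⟩, fun j hj => ?_⟩
          simp [hj]
        · rintro hx
          obtain ⟨v, hv⟩ := Set.mem_iUnion.1 hx
          have := hv i (Nat.lt_succ_self i)
          simp only [Nat.lt_succ_self, dif_pos] at this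
          simp [this, v.2]
      rw [this]
      exact MeasurableSet.iUnion fun v =>
        MeasurableSpace.measurableSet_generateFrom ⟨_, _, rfl⟩
    rw [show (inferInstance : MeasurableSpace (ℕ → ℤ)) = MeasurableSpace.pi from rfl,
      MeasurableSpace.pi]
    exact iSup_le fun i => MeasurableSpace.comap_le_iff_le_map.2 (heval i)
  · rw [MeasurableSpace.generateFrom_le_iff]
    rintro s ⟨n, c, rfl⟩
    exact measurableSet_pre n c

lemma measure_ext_pre (μ ν : Measure (ℕ → ℤ)) [IsProbabilityMeasure μ] [IsProbabilityMeasure ν]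
    (h : ∀ n c, μ (pre n c) = ν (pre n c)) : μ = ν :=
  MeasureTheory.ext_of_generate_finite preSets generateFrom_preSets isPiSystem_preSets
    (by rintro s ⟨n, c, rfl⟩; exact h n c) (by simp)

lemma map_eps_pre {Ω : Type*} [MeasurableSpace Ω] (P : Measure Ω)
    (ε : ℕ → Ω → ℤ) (hmeas : ∀ k, Measurable (ε k))
    (hindep : iIndepFun ε P)
    (hlaw : ∀ k, Measure.map (ε k) P = bern) (n : ℕ) (c : ℕ → ℤ) :
    Measure.map (fun ω i => ε i ω) P (pre n c) = ∏ i ∈ Finset.range n, bern {c i} := by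
  rw [Measure.map_apply (measurable_pi_lambda _ fun i => hmeas i) (measurableSet_pre n c)]
  have h2 : (fun ω i => ε i ω) ⁻¹' pre n c = ⋂ i ∈ Finset.range n, ε i ⁻¹' {c i} := by
    ext ω; simp [pre]
  rw [h2, hindep.meas_biInter (fun i _ => ⟨{c i}, measurableSet_singleton _, rfl⟩)]
  exact Finset.prod_congr rfl fun i _ => by
    rw [← hlaw i, Measure.map_apply (hmeas i) (measurableSet_singleton _)]

/-! ### The flip and negation transformations -/

/-- flip the signs of all entries strictly after the first `1`. -/
def flipSeq (x : ℕ → ℤ) : ℕ → ℤ := fun i => if ∃ j < i, x j = 1 then -x i else x i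

lemma flipSeq_local {x y : ℕ → ℤ} {i : ℕ} (h : ∀ j ≤ i, x j = y j) :
    flipSeq x i = flipSeq y i := by
  have : (∃ j < i, x j = 1) ↔ (∃ j < i, y j = 1) := by
    constructor <;> rintro ⟨j, hj, hj1⟩ <;> exact ⟨j, hj, by
      first
      | (rw [← h j hj.le]; exact hj1)
      | (rw [h j hj.le]; exact hj1)⟩
  rw [flipSeq, flipSeq, if_congr this (by rw [h i le_rfl]) (h i le_rfl)]

lemma flipSeq_cond (x : ℕ → ℤ) (i : ℕ) :
    (∃ j < i, flipSeq x j = 1) ↔ (∃ j < i, x j = 1) := by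
  constructor
  · rintro ⟨j, hj, hj1⟩
    by_cases hc : ∃ m < j, x m = 1
    · obtain ⟨m, hm, hm1⟩ := hc
      exact ⟨m, hm.trans hj, hm1⟩
    · rw [flipSeq, if_neg hc] at hj1
      exact ⟨j, hj, hj1⟩
  · rintro ⟨j, hj, hj1⟩
    have hex : ∃ m, x m = 1 := ⟨j, hj1⟩
    set m0 := Nat.find hex with hm0
    have hm0le : m0 ≤ j := Nat.find_le hj1
    refine ⟨m0, lt_of_le_of_lt hm0le hj, ?_⟩
    rw [flipSeq, if_neg]
    · exact Nat.find_spec hex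
    · rintro ⟨m, hm, hm1⟩
      exact Nat.find_min hex hm hm1

lemma flipSeq_invol (x : ℕ → ℤ) : flipSeq (flipSeq x) = x := by
  funext i
  rw [flipSeq, if_congr (flipSeq_cond x i) rfl rfl, flipSeq]
  by_cases hc : ∃ j < i, x j = 1 <;> simp [hc]

lemma measurable_flipSeq : Measurable flipSeq := by
  refine measurable_pi_lambda _ fun i => ?_
  have hset : MeasurableSet {x : ℕ → ℤ | ∃ j < i, x j = 1} := by
    have : {x : ℕ → ℤ | ∃ j < i, x j = 1}
        = ⋃ j ∈ Finset.range i, (fun x : ℕ → ℤ => x j) ⁻¹' {1} := by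
      ext x; simp
    rw [this]
    exact MeasurableSet.biUnion (Set.to_countable _)
      fun j _ => (measurable_pi_apply j) (measurableSet_singleton _)
  exact Measurable.ite hset (measurable_pi_apply i).neg (measurable_pi_apply i)

lemma flipSeq_preimage_pre (n : ℕ) (c : ℕ → ℤ) :
    flipSeq ⁻¹' pre n c = pre n (flipSeq c) := by
  ext x
  constructor
  · intro hx i hi
    have : flipSeq c i = flipSeq (flipSeq x) i :=
      flipSeq_local fun j hj => (hx j (lt_of_le_of_lt hj hi)).symm
    rw [this, flipSeq_invol]
  · intro hx i hi
    have : flipSeq x i = flipSeq (flipSeq c) i :=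
      flipSeq_local fun j hj => hx j (lt_of_le_of_lt hj hi)
    rw [this, flipSeq_invol]

lemma measurable_negSeq : Measurable (fun (x : ℕ → ℤ) i => -x i) :=
  measurable_pi_lambda _ fun i => (measurable_pi_apply i).neg

lemma negSeq_preimage_pre (n : ℕ) (c : ℕ → ℤ) :
    (fun (x : ℕ → ℤ) i => -x i) ⁻¹' pre n c = pre n (fun i => -c i) := by
  ext x
  simp only [pre, Set.mem_preimage, Set.mem_setOf_eq]
  constructor <;> intro h i hi <;> have := h i hi <;> omega

lemma map_negSeq_eq {Ω : Type*} [MeasurableSpace Ω] (P : Measure Ω) [IsProbabilityMeasure P]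
    (ε : ℕ → Ω → ℤ) (hmeas : ∀ k, Measurable (ε k))
    (hindep : iIndepFun ε P)
    (hlaw : ∀ k, Measure.map (ε k) P = bern) :
    Measure.map (fun (x : ℕ → ℤ) i => -x i) (Measure.map (fun ω i => ε i ω) P)
      = Measure.map (fun ω i => ε i ω) P := by
  have hε : Measurable (fun ω i => ε i ω) := measurable_pi_lambda _ fun i => hmeas i
  have h1 : IsProbabilityMeasure (Measure.map (fun ω i => ε i ω) P) :=
    Measure.isProbabilityMeasure_map hε.aemeasurable
  have h2 : IsProbabilityMeasure (Measure.map (fun (x : ℕ → ℤ) i => -x i)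
      (Measure.map (fun ω i => ε i ω) P)) :=
    Measure.isProbabilityMeasure_map measurable_negSeq.aemeasurable
  refine measure_ext_pre _ _ fun n c => ?_
  rw [Measure.map_apply measurable_negSeq (measurableSet_pre n c), negSeq_preimage_pre,
    map_eps_pre P ε hmeas hindep hlaw, map_eps_pre P ε hmeas hindep hlaw]
  exact Finset.prod_congr rfl fun i _ => bern_neg_singleton (c i)

lemma map_flipSeq_eq {Ω : Type*} [MeasurableSpace Ω] (P : Measure Ω) [IsProbabilityMeasure P]
    (ε : ℕ → Ω → ℤ) (hmeas : ∀ k, Measurable (ε k))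
    (hindep : iIndepFun ε P)
    (hlaw : ∀ k, Measure.map (ε k) P = bern) :
    Measure.map flipSeq (Measure.map (fun ω i => ε i ω) P)
      = Measure.map (fun ω i => ε i ω) P := by
  have hε : Measurable (fun ω i => ε i ω) := measurable_pi_lambda _ fun i => hmeas i
  have h1 : IsProbabilityMeasure (Measure.map (fun ω i => ε i ω) P) :=
    Measure.isProbabilityMeasure_map hε.aemeasurable
  have h2 : IsProbabilityMeasure (Measure.map flipSeq (Measure.map (fun ω i => ε i ω) P)) :=
    Measure.isProbabilityMeasure_map measurable_flipSeq.aemeasurable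
  refine measure_ext_pre _ _ fun n c => ?_
  rw [Measure.map_apply measurable_flipSeq (measurableSet_pre n c), flipSeq_preimage_pre,
    map_eps_pre P ε hmeas hindep hlaw, map_eps_pre P ε hmeas hindep hlaw]
  refine Finset.prod_congr rfl fun i _ => ?_
  rw [flipSeq]
  by_cases hc : ∃ j < i, c j = 1
  · rw [if_pos hc, bern_neg_singleton]
  · rw [if_neg hc]

/-! ### The deterministic path map -/

def Gpath (x : ℕ → ℤ) : ℕ → ℤ := fun n => ∑ j ∈ Finset.Icc 1 n, x (Nat.log 2 j)

lemma measurable_Gpath : Measurable Gpath :=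
  measurable_pi_lambda _ fun n =>
    Finset.measurable_sum _ fun j _ => measurable_pi_apply (Nat.log 2 j)

lemma Gpath_zero (x : ℕ → ℤ) : Gpath x 0 = 0 := by simp [Gpath]

lemma Gpath_succ (x : ℕ → ℤ) (k : ℕ) :
    Gpath x (k + 1) = Gpath x k + x (Nat.log 2 (k + 1)) := by
  rw [Gpath, Gpath, Finset.sum_Icc_succ_top (Nat.le_add_left 1 k)]

lemma Gpath_neg (x : ℕ → ℤ) (n : ℕ) : Gpath (fun i => -x i) n = -Gpath x n := by
  simp [Gpath]

lemma reflect_zero (s : ℕ → ℤ) (h0 : s 0 = 0) : reflect 0 s = fun n => -s n := by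
  funext n
  rw [reflect]
  rw [Finset.sum_congr rfl
    (fun k _ => if_neg (by push_neg; exact ⟨0, Nat.zero_le k, by simp [h0]⟩))]
  rw [Finset.sum_range_sub' s n, h0, zero_sub]

lemma Gpath_low {x : ℕ → ℤ} {K : ℕ} (h : ∀ m < K, x m = -1) {j : ℕ} (hj : j < 2 ^ K) :
    Gpath x j = -(j : ℤ) := by
  rw [Gpath, Finset.sum_congr rfl (g := fun _ => (-1 : ℤ)) (fun i hi => ?_), Finset.sum_const]
  · simp [Nat.card_Icc]
  · simp only [Finset.mem_Icc] at hi
    exact h _ (Nat.log_lt_of_lt_pow (by omega) (lt_of_le_of_lt hi.2 hj))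

lemma Gpath_mid {x : ℕ → ℤ} {K : ℕ} (h : ∀ m < K, x m = -1) (h1 : x K = 1) {j : ℕ}
    (hj1 : 2 ^ K ≤ j + 1) (hj2 : j < 2 ^ (K + 1)) :
    Gpath x j = (j : ℤ) - 2 ^ (K + 1) + 2 := by
  have hpow : (1 : ℕ) ≤ 2 ^ K := Nat.one_le_two_pow
  have hIcc : ∀ a : ℕ, Finset.Icc 1 a = Finset.Ioc 0 a := fun a => by
    rw [← Finset.Icc_add_one_left_eq_Ioc, zero_add]
  rw [Gpath, hIcc, ← Finset.sum_Ioc_consecutive _ (Nat.zero_le (2 ^ K - 1)) (by omega)]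
  have hlow : ∑ i ∈ Finset.Ioc 0 (2 ^ K - 1), x (Nat.log 2 i) = -((2 ^ K : ℤ) - 1) := by
    have hl := Gpath_low h (j := 2 ^ K - 1) (by omega)
    rw [Gpath, hIcc] at hl
    rw [hl, Nat.cast_sub hpow]
    push_cast
    ring
  have hhigh : ∑ i ∈ Finset.Ioc (2 ^ K - 1) j, x (Nat.log 2 i)
      = ((j : ℤ) - ((2 ^ K : ℤ) - 1)) := by
    rw [Finset.sum_congr rfl (g := fun _ => (1 : ℤ)) (fun i hi => ?_), Finset.sum_const]
    · rw [Nat.card_Ioc, nsmul_eq_mul, mul_one, Nat.cast_sub (by omega : 2 ^ K - 1 ≤ j),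
        Nat.cast_sub hpow]
      push_cast
      ring
    · simp only [Finset.mem_Ioc] at hi
      have hge : 2 ^ K ≤ i := by omega
      have hlt : i < 2 ^ (K + 1) := by omega
      rw [Nat.log_eq_of_pow_le_of_lt_pow hge hlt, h1]
  rw [hlow, hhigh]
  ring

lemma key_iff {x : ℕ → ℤ} (hx : ∀ k, x k = 1 ∨ x k = -1) (k : ℕ) :
    (∃ j ≤ k, Gpath x j = 1) ↔ (∃ m < Nat.log 2 (k + 1), x m = 1) := by
  set L := Nat.log 2 (k + 1) with hL
  constructor
  · rintro ⟨j, hj, hj1⟩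
    by_contra hno
    push_neg at hno
    have hno' : ∀ m < L, x m = -1 := fun m hm => (hx m).resolve_left (hno m hm)
    have hkL : k + 1 < 2 ^ (L + 1) := Nat.lt_pow_succ_log_self (by norm_num) (k + 1)
    have hjL : j < 2 ^ (L + 1) := by omega
    rcases hx L with h1 | h1
    · rcases Nat.lt_or_ge j (2 ^ L) with hcase | hcase
      · rw [Gpath_low hno' hcase] at hj1; omega
      · rw [Gpath_mid hno' h1 (by omega) hjL] at hj1
        have h3 : (j : ℤ) + 1 ≤ (k : ℤ) + 1 := by exact_mod_cast by omega
        have h2 : ((k : ℤ) + 1) < 2 ^ (L + 1) := by exact_mod_cast hkL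
        omega
    · have hno'' : ∀ m < L + 1, x m = -1 := by
        intro m hm
        rcases Nat.lt_or_ge m L with h | h
        · exact hno' m h
        · have : m = L := by omega
          rw [this]; exact h1
      rw [Gpath_low hno'' hjL] at hj1
      omega
  · rintro ⟨m, hm, hm1⟩
    have hex : ∃ m, x m = 1 := ⟨m, hm1⟩
    set m1 := Nat.find hex with hm1def
    have hspec : x m1 = 1 := Nat.find_spec hex
    have hlow : ∀ m' < m1, x m' = -1 := fun m' hm' =>
      (hx m').resolve_left (Nat.find_min hex hm')
    have hm1le : m1 ≤ m := Nat.find_le hm1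
    have hm1L : m1 + 1 ≤ L := by omega
    have hpow : 2 ^ (m1 + 1) ≤ k + 1 :=
      le_trans (Nat.pow_le_pow_right (by norm_num) hm1L)
        (Nat.pow_log_le_self 2 (Nat.succ_ne_zero k))
    refine ⟨2 ^ (m1 + 1) - 1, by omega, ?_⟩
    rw [Gpath_mid hlow hspec (by have := Nat.one_le_two_pow (n := m1 + 1); omega)
      (by have := Nat.one_le_two_pow (n := m1 + 1); omega)]
    have h1 : (1 : ℕ) ≤ 2 ^ (m1 + 1) := Nat.one_le_two_pow
    push_cast [h1]
    ring

lemma reflect_one_eq {x : ℕ → ℤ} (hx : ∀ k, x k = 1 ∨ x k = -1) :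
    reflect 1 (Gpath x) = Gpath (flipSeq x) := by
  funext n
  rw [reflect]
  have hR : Gpath (flipSeq x) n = ∑ k ∈ Finset.range n, flipSeq x (Nat.log 2 (k + 1)) := by
    induction n with
    | zero => simp [Gpath]
    | succ n ih => rw [Gpath_succ, ih, Finset.sum_range_succ]
  rw [hR]
  refine Finset.sum_congr rfl fun k _ => ?_
  have hdiff : Gpath x (k + 1) - Gpath x k = x (Nat.log 2 (k + 1)) := by
    rw [Gpath_succ]; ring
  have hdiff' : Gpath x k - Gpath x (k + 1) = -x (Nat.log 2 (k + 1)) := by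
    rw [Gpath_succ]; ring
  have hiff : (∀ j ≤ k, Gpath x j ≠ 1) ↔ ¬∃ m < Nat.log 2 (k + 1), x m = 1 := by
    rw [← key_iff hx k]
    push_neg
    rfl
  rw [flipSeq]
  by_cases hc : ∃ m < Nat.log 2 (k + 1), x m = 1
  · rw [if_pos hc, if_neg (by rw [hiff]; exact not_not_intro hc), hdiff']
  · rw [if_neg hc, if_pos (hiff.mpr hc), hdiff]

/-! ### Almost sure properties of the Bernoulli sequence -/

lemma ae_pm {Ω : Type*} [MeasurableSpace Ω] (P : Measure Ω)
    (ε : ℕ → Ω → ℤ) (hmeas : ∀ k, Measurable (ε k))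
    (hlaw : ∀ k, Measure.map (ε k) P = bern) :
    ∀ᵐ ω ∂P, ∀ k, ε k ω = 1 ∨ ε k ω = -1 := by
  rw [ae_all_iff]
  intro k
  have hs : MeasurableSet ({1, -1}ᶜ : Set ℤ) := (by measurability)
  have h0 : P (ε k ⁻¹' ({1, -1}ᶜ : Set ℤ)) = 0 := by
    rw [← Measure.map_apply (hmeas k) hs, hlaw k, bern_apply_ms hs]
    simp [Set.indicator]
  have hsub : {ω | ¬(ε k ω = 1 ∨ ε k ω = -1)} ⊆ ε k ⁻¹' ({1, -1}ᶜ : Set ℤ) := by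
    intro ω hω
    simp only [Set.mem_setOf_eq, not_or] at hω
    simp only [Set.mem_preimage, Set.mem_compl_iff, Set.mem_insert_iff, Set.mem_singleton_iff]
    tauto
  exact measure_mono_null hsub h0

lemma ae_exists_one {Ω : Type*} [MeasurableSpace Ω] (P : Measure Ω)
    (ε : ℕ → Ω → ℤ) (hmeas : ∀ k, Measurable (ε k))
    (hindep : iIndepFun ε P)
    (hlaw : ∀ k, Measure.map (ε k) P = bern) :
    ∀ᵐ ω ∂P, ∃ k, ε k ω = 1 := by
  have hone : ∀ k, P (ε k ⁻¹' ({1}ᶜ : Set ℤ)) = 2⁻¹ := by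
    intro k
    rw [← Measure.map_apply (hmeas k) (measurableSet_singleton 1).compl, hlaw k,
      bern_apply_ms (measurableSet_singleton 1).compl]
    norm_num [Set.indicator]
  have hB : ∀ n : ℕ, P {ω | ∀ k, ε k ω ≠ 1} ≤ (2⁻¹ : ℝ≥0∞) ^ n := by
    intro n
    have hsub : {ω | ∀ k, ε k ω ≠ 1} ⊆ ⋂ k ∈ Finset.range n, ε k ⁻¹' ({1}ᶜ : Set ℤ) := by
      intro ω hω
      simp only [Set.mem_iInter, Set.mem_preimage, Set.mem_compl_iff, Set.mem_singleton_iff]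
      exact fun k _ => hω k
    refine le_trans (measure_mono hsub) ?_
    rw [hindep.meas_biInter (fun k _ => ⟨{1}ᶜ, (measurableSet_singleton 1).compl, rfl⟩)]
    rw [Finset.prod_congr rfl fun k _ => hone k, Finset.prod_const, Finset.card_range]
  have hzero : P {ω | ∀ k, ε k ω ≠ 1} = 0 := by
    refine le_antisymm ?_ zero_le
    exact ge_of_tendsto' (ENNReal.tendsto_pow_atTop_nhds_zero_of_lt_one
      (by norm_num : (2⁻¹ : ℝ≥0∞) < 1)) hB
  rw [ae_iff]
  convert hzero using 2
  ext ω
  simp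

/-! ### The event used to contradict the Ocone property -/

def Epath : Set (ℕ → ℤ) :=
  {g | g 3 - g 2 = g 2 - g 1 ∧ g 1 ≠ 0 ∧ g 2 - g 1 ≠ 0 ∧ g 3 - g 2 ≠ 0}

lemma measurableSet_Epath : MeasurableSet Epath := by
  have h : ∀ i : ℕ, Measurable fun g : ℕ → ℤ => g i := fun i => measurable_pi_apply i
  have h32 : Measurable fun g : ℕ → ℤ => g 3 - g 2 := (h 3).sub (h 2)
  have h21 : Measurable fun g : ℕ → ℤ => g 2 - g 1 := (h 2).sub (h 1)
  have e1 : MeasurableSet {g : ℕ → ℤ | g 3 - g 2 = g 2 - g 1} := by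
    have : {g : ℕ → ℤ | g 3 - g 2 = g 2 - g 1}
        = (fun g : ℕ → ℤ => (g 3 - g 2) - (g 2 - g 1)) ⁻¹' {0} := by
      ext g; simp [sub_eq_zero]
    rw [this]
    exact (h32.sub h21) (measurableSet_singleton 0)
  exact e1.inter (((h 1) (measurableSet_singleton 0)).compl.inter
    (((h21 (measurableSet_singleton 0)).compl).inter
      ((h32 (measurableSet_singleton 0)).compl)))

lemma aemeasurable_of_map_eq_bern {Ω' : Type*} [MeasurableSpace Ω'] {P' : Measure Ω'}
    {f : Ω' → ℤ} (h : Measure.map f P' = bern) : AEMeasurable f P' := by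
  by_contra hc
  rw [Measure.map_of_not_aemeasurable hc] at h
  have h2 : (0 : Measure ℤ) Set.univ = bern Set.univ := by rw [h]
  simp [measure_univ] at h2

lemma ocone_bound {Ω' : Type*} [MeasurableSpace Ω'] (P' : Measure Ω') [IsProbabilityMeasure P']
    (S : ℕ → Ω' → ℤ) (A : ℕ → Ω' → ℕ) (hBRW : IsBernoulliRW P' S)
    (hA0 : ∀ ω, A 0 ω = 0) (hAstep : ∀ ω n, A (n + 1) ω = A n ω ∨ A (n + 1) ω = A n ω + 1) :
    P' ((fun ω => (fun n => S (A n ω) ω)) ⁻¹' Epath) ≤ 2⁻¹ := by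
  obtain ⟨hS0, hSindep, hSlaw⟩ := hBRW
  set X1 := fun ω => S 2 ω - S 1 ω with hX1
  set X2 := fun ω => S 3 ω - S 2 ω with hX2
  have hsub : (fun ω => (fun n => S (A n ω) ω)) ⁻¹' Epath
      ⊆ {ω | X1 ω = X2 ω} ∪ {ω | S 0 ω ≠ 0} := by
    intro ω hω
    by_cases h0 : S 0 ω = 0
    · left
      obtain ⟨heq, h1, h2, h3⟩ := hω
      have hA1 : A 1 ω = 1 := by
        rcases hAstep ω 0 with h | h
        · exfalso; apply h1; simp only [h, hA0, h0]
        · rw [h, hA0]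
      have hA2 : A 2 ω = 2 := by
        rcases hAstep ω 1 with h | h
        · exfalso; apply h2; simp only [h]; ring
        · rw [h, hA1]
      have hA3 : A 3 ω = 3 := by
        rcases hAstep ω 2 with h | h
        · exfalso; apply h3; simp only [h]; ring
        · rw [h, hA2]
      simp only [hA1, hA2, hA3] at heq
      exact heq.symm
    · right; exact h0
  have hnull : P' {ω | S 0 ω ≠ 0} = 0 := by
    rw [← ae_iff] at *
    exact hS0
  refine le_trans (measure_mono hsub) (le_trans (measure_union_le _ _) ?_)
  rw [hnull, add_zero]
  have haem1 : AEMeasurable X1 P' := aemeasurable_of_map_eq_bern (hSlaw 1)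
  have haem2 : AEMeasurable X2 P' := aemeasurable_of_map_eq_bern (hSlaw 2)
  set Y1 := haem1.mk X1 with hY1
  set Y2 := haem2.mk X2 with hY2
  have hmY1 : Measurable Y1 := haem1.measurable_mk
  have hmY2 : Measurable Y2 := haem2.measurable_mk
  have hcongr : P' {ω | X1 ω = X2 ω} = P' {ω | Y1 ω = Y2 ω} := by
    refine measure_congr ?_
    rw [Filter.eventuallyEq_set]
    filter_upwards [haem1.ae_eq_mk, haem2.ae_eq_mk] with ω hw1 hw2
    simp only [Set.mem_setOf_eq, hw1, hw2]
    exact Iff.rfl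
  rw [hcongr]
  have hind : IndepFun X1 X2 P' := hSindep.indepFun (by norm_num : (1 : ℕ) ≠ 2)
  have hindY : IndepFun Y1 Y2 P' := hind.congr haem1.ae_eq_mk haem2.ae_eq_mk
  have hlawY1 : Measure.map Y1 P' = bern := by
    rw [← Measure.map_congr haem1.ae_eq_mk]; exact hSlaw 1
  have hlawY2 : Measure.map Y2 P' = bern := by
    rw [← Measure.map_congr haem2.ae_eq_mk]; exact hSlaw 2
  have hsub2 : {ω | Y1 ω = Y2 ω}
      ⊆ (Y1 ⁻¹' {1} ∩ Y2 ⁻¹' {1}) ∪ ((Y1 ⁻¹' {-1} ∩ Y2 ⁻¹' {-1}) ∪ Y1 ⁻¹' ({1, -1}ᶜ)) := by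
    intro ω hω
    simp only [Set.mem_setOf_eq] at hω
    by_cases h1 : Y1 ω = 1
    · exact Or.inl ⟨h1, by simp only [Set.mem_preimage, Set.mem_singleton_iff, ← hω]; exact h1⟩
    · by_cases h2 : Y1 ω = -1
      · exact Or.inr (Or.inl ⟨h2,
          by simp only [Set.mem_preimage, Set.mem_singleton_iff, ← hω]; exact h2⟩)
      · exact Or.inr (Or.inr (by simp [h1, h2]))
  have hPY : ∀ (Y : Ω' → ℤ), Measurable Y → Measure.map Y P' = bern →
      ∀ (s : Set ℤ), MeasurableSet s → P' (Y ⁻¹' s) = bern s := by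
    intro Y hY hlawY s hs
    rw [← Measure.map_apply hY hs, hlawY]
  have hprod : ∀ (t : ℤ), P' (Y1 ⁻¹' {t} ∩ Y2 ⁻¹' {t}) = bern {t} * bern {t} := by
    intro t
    rw [(indepFun_iff_measure_inter_preimage_eq_mul.mp hindY) {t} {t}
      (measurableSet_singleton t) (measurableSet_singleton t),
      hPY Y1 hmY1 hlawY1 _ (measurableSet_singleton t),
      hPY Y2 hmY2 hlawY2 _ (measurableSet_singleton t)]
  have hb1 : bern {(1 : ℤ)} = 2⁻¹ := by
    rw [bern_apply_ms (measurableSet_singleton 1)]; norm_num [Set.indicator]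
  have hbm1 : bern {(-1 : ℤ)} = 2⁻¹ := by
    rw [bern_apply_ms (measurableSet_singleton (-1))]; norm_num [Set.indicator]
  have hbc : bern ({1, -1}ᶜ : Set ℤ) = 0 := by
    rw [bern_apply_ms (by measurability)]; norm_num [Set.indicator]
  refine le_trans (measure_mono hsub2) (le_trans (measure_union_le _ _) ?_)
  refine le_trans (add_le_add le_rfl (measure_union_le _ _)) ?_
  rw [hprod 1, hprod (-1), hPY Y1 hmY1 hlawY1 _ (by measurability), hb1, hbm1, hbc]
  rw [add_zero, ← two_mul, ← mul_assoc, ENNReal.mul_inv_cancel (by norm_num) (by norm_num),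
    one_mul]


/-- **Counterexample 2.** Let `(ε_k)_{k ≥ 0}` be i.i.d. symmetric Bernoulli random
variables and let `M_n = ∑_{j=1}^n ε_{⌊log₂ j⌋}`, so that all the increments
`M_n - M_{n-1}` with `n ∈ [2^k, 2^{k+1} - 1]` equal `ε_k`. Then `Θ^0(M) ≐ M`,
`T_1(M) < ∞` a.s., `Θ^1(M) ≐ M`, but `M` is not a discrete Ocone local martingale. -/
theorem counterexample_two
    {Ω : Type*} [MeasurableSpace Ω] (P : Measure Ω) [IsProbabilityMeasure P]
    (ε : ℕ → Ω → ℤ) (hmeas : ∀ k, Measurable (ε k))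
    (hindep : iIndepFun ε P)
    (hlaw : ∀ k, Measure.map (ε k) P = bern)
    (M : ℕ → Ω → ℤ)
    (hM : ∀ ω n, M n ω = ∑ j ∈ Finset.Icc 1 n, ε (Nat.log 2 j) ω) :
    Measure.map (fun ω => reflect 0 (fun n => M n ω)) P
        = Measure.map (fun ω => (fun n => M n ω)) P ∧
      (∀ᵐ ω ∂P, ∃ k, M k ω = 1) ∧
      Measure.map (fun ω => reflect 1 (fun n => M n ω)) P
        = Measure.map (fun ω => (fun n => M n ω)) P ∧
      ¬ IsDiscreteOcone P M := by
  have hε : Measurable (fun ω i => ε i ω) := measurable_pi_lambda _ fun i => hmeas i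
  have hGM : ∀ ω, (fun n => M n ω) = Gpath (fun i => ε i ω) := fun ω =>
    funext fun n => hM ω n
  have hMpath_eq : (fun ω => (fun n => M n ω)) = Gpath ∘ (fun ω i => ε i ω) := by
    funext ω; exact hGM ω
  have hMpathm : Measurable (fun ω => (fun n => M n ω)) := by
    rw [hMpath_eq]; exact measurable_Gpath.comp hε
  have hmapM : Measure.map (fun ω => (fun n => M n ω)) P
      = Measure.map Gpath (Measure.map (fun ω i => ε i ω) P) := by
    rw [hMpath_eq, ← Measure.map_map measurable_Gpath hε]
  refine ⟨?_, ?_, ?_, ?_⟩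
  · -- (1) Θ^0(M) ≐ M
    have h0 : (fun ω => reflect 0 (fun n => M n ω))
        = Gpath ∘ (fun (x : ℕ → ℤ) i => -x i) ∘ (fun ω i => ε i ω) := by
      funext ω
      rw [hGM ω, reflect_zero _ (Gpath_zero _)]
      funext n
      exact (Gpath_neg (fun i => ε i ω) n).symm
    rw [h0, hmapM]
    rw [show Gpath ∘ (fun (x : ℕ → ℤ) i => -x i) ∘ (fun ω i => ε i ω)
        = (Gpath ∘ (fun (x : ℕ → ℤ) i => -x i)) ∘ (fun ω i => ε i ω) from rfl,
      ← Measure.map_map (measurable_Gpath.comp measurable_negSeq) hε,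
      ← Measure.map_map measurable_Gpath measurable_negSeq,
      map_negSeq_eq P ε hmeas hindep hlaw]
  · -- (2) T_1(M) < ∞ a.s.
    filter_upwards [ae_pm P ε hmeas hlaw, ae_exists_one P ε hmeas hindep hlaw] with ω hpm hex
    set K := Nat.find hex with hK
    have hspec : ε K ω = 1 := Nat.find_spec hex
    have hlow : ∀ m < K, ε m ω = -1 := fun m hm => (hpm m).resolve_left (Nat.find_min hex hm)
    refine ⟨2 ^ (K + 1) - 1, ?_⟩
    have hone : (1 : ℕ) ≤ 2 ^ (K + 1) := Nat.one_le_two_pow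
    have := Gpath_mid (x := fun i => ε i ω) hlow hspec (j := 2 ^ (K + 1) - 1)
      (by have : (2:ℕ) ^ K ≤ 2 ^ (K + 1) := Nat.pow_le_pow_right (by norm_num) (by omega)
          omega)
      (by omega)
    rw [show M (2 ^ (K + 1) - 1) ω = Gpath (fun i => ε i ω) (2 ^ (K + 1) - 1) from
      congrFun (hGM ω) _, this]
    push_cast [hone]
    ring
  · -- (3) Θ^1(M) ≐ M
    have hae : (fun ω => reflect 1 (fun n => M n ω))
        =ᵐ[P] (Gpath ∘ flipSeq) ∘ (fun ω i => ε i ω) := by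
      filter_upwards [ae_pm P ε hmeas hlaw] with ω hpm
      show reflect 1 (fun n => M n ω) = Gpath (flipSeq (fun i => ε i ω))
      rw [hGM ω, reflect_one_eq hpm]
    rw [Measure.map_congr hae, hmapM,
      ← Measure.map_map (measurable_Gpath.comp measurable_flipSeq) hε,
      ← Measure.map_map measurable_Gpath measurable_flipSeq,
      map_flipSeq_eq P ε hmeas hindep hlaw]
  · -- (4) not Ocone
    rintro ⟨Ω', mΩ', P', S, A, hP', hBRW, hA0, hAstep, hindepSA, hmap⟩
    haveI := hP'
    have hone : Measure.map (fun ω => (fun n => M n ω)) P Epath = 1 := by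
      rw [Measure.map_apply hMpathm measurableSet_Epath]
      have hae : ∀ᵐ ω ∂P, (fun n => M n ω) ∈ Epath := by
        filter_upwards [ae_pm P ε hmeas hlaw] with ω hpm
        rw [hGM ω]
        set x := fun i => ε i ω with hx
        have hg1 : Gpath x 1 = x (Nat.log 2 1) := by
          rw [show (1 : ℕ) = 0 + 1 from rfl, Gpath_succ, Gpath_zero, zero_add]
        have hg2 : Gpath x 2 = Gpath x 1 + x (Nat.log 2 2) := Gpath_succ x 1
        have hg3 : Gpath x 3 = Gpath x 2 + x (Nat.log 2 3) := Gpath_succ x 2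
        have hlog1 : Nat.log 2 1 = 0 := by simp
        have hlog2 : Nat.log 2 2 = 1 :=
          Nat.log_eq_of_pow_le_of_lt_pow (by norm_num) (by norm_num)
        have hlog3 : Nat.log 2 3 = 1 :=
          Nat.log_eq_of_pow_le_of_lt_pow (by norm_num) (by norm_num)
        rw [hlog1] at hg1
        rw [hlog2] at hg2
        rw [hlog3] at hg3
        have hx0 : x 0 ≠ 0 := by rcases hpm 0 with h | h <;> rw [show x 0 = ε 0 ω from rfl, h]
          <;> omega
        have hx1 : x 1 ≠ 0 := by rcases hpm 1 with h | h <;> rw [show x 1 = ε 1 ω from rfl, h]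
          <;> omega
        refine ⟨by rw [hg3, hg2]; ring, by rw [hg1]; exact hx0, ?_, ?_⟩
        · rw [hg2]; simpa using hx1
        · rw [hg3]; simpa using hx1
      rw [← prob_compl_eq_zero_iff (hMpathm measurableSet_Epath)]
      refine measure_mono_null ?_ (ae_iff.mp hae)
      intro ω hω
      exact hω
    rw [hmap] at hone
    have haem' : AEMeasurable (fun ω => (fun n => S (A n ω) ω)) P' := by
      by_contra hc
      rw [Measure.map_of_not_aemeasurable hc] at hone
      simp at hone
    rw [Measure.map_apply_of_aemeasurable haem' measurableSet_Epath] at hone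
    have hbound := ocone_bound P' S A hBRW hA0 hAstep
    rw [hone] at hbound
    have : ((2 : ℝ≥0∞)⁻¹ : ℝ≥0∞) < 1 := by norm_num
    exact absurd (lt_of_le_of_lt hbound this) (lt_irrefl 1)
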